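/- Consider a 3-layer network (one hidden layer): T(x) = R₂(A₂ R₁(A₁ x + b₁) + b₂), where R₁ is componentwise a 1/2-averaged operator (R₁ = (1/2)Id + (1/2)Q with Q 1-Lipschitz componentwise) and R₂ is componentwise 1-Lipschitz. With weighted 1-norms ‖·‖^0, ‖·‖^1, ‖·‖^2 on the layers, T is Lipschitz from ‖·‖^0 to ‖·‖^2 with constant (1/2)(‖A₂A₁‖^{0,2} + ‖A₂‖^{1,2}·‖A₁‖^{0,1}). -/

import Mathlib

/-- The weighted 1-norm `‖x‖ = Σ_i w_i |x_i|`. -/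
def wnorm {m : ℕ} (w : Fin m → ℝ) (x : Fin m → ℝ) : ℝ := ∑ i, w i * |x i|

/-- The operator norm of a matrix between weighted-1-normed spaces, defined as the
supremum of `‖Mx‖ / ‖x‖` over nonzero `x`. -/
noncomputable def opNormW {mk ml : ℕ} (wk : Fin mk → ℝ) (wl : Fin ml → ℝ)
    (M : Matrix (Fin ml) (Fin mk) ℝ) : ℝ :=
  sSup {r : ℝ | ∃ x : Fin mk → ℝ, x ≠ 0 ∧ r = wnorm wl (M.mulVec x) / wnorm wk x}

lemma wnorm_nonneg {m : ℕ} {w : Fin m → ℝ} (hw : ∀ i, 0 ≤ w i) (x : Fin m → ℝ) :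
    0 ≤ wnorm w x :=
  Finset.sum_nonneg fun i _ => mul_nonneg (hw i) (abs_nonneg _)

lemma wnorm_pos {m : ℕ} {w : Fin m → ℝ} (hw : ∀ i, 0 < w i) {x : Fin m → ℝ} (hx : x ≠ 0) :
    0 < wnorm w x := by
  obtain ⟨j, hj⟩ : ∃ j, x j ≠ 0 := by
    by_contra h; push_neg at h; exact hx (funext h)
  exact Finset.sum_pos' (fun i _ => mul_nonneg (hw i).le (abs_nonneg _))
    ⟨j, Finset.mem_univ j, mul_pos (hw j) (abs_pos.2 hj)⟩

lemma wnorm_mono {m : ℕ} {w : Fin m → ℝ} (hw : ∀ i, 0 ≤ w i) {x y : Fin m → ℝ}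
    (h : ∀ i, |x i| ≤ |y i|) : wnorm w x ≤ wnorm w y :=
  Finset.sum_le_sum fun i _ => mul_le_mul_of_nonneg_left (h i) (hw i)

lemma opNormW_nonneg {mk ml : ℕ} {wk : Fin mk → ℝ} {wl : Fin ml → ℝ}
    (hwk : ∀ i, 0 ≤ wk i) (hwl : ∀ i, 0 ≤ wl i) (M : Matrix (Fin ml) (Fin mk) ℝ) :
    0 ≤ opNormW wk wl M := by
  apply Real.sSup_nonneg
  rintro r ⟨x, -, rfl⟩
  exact div_nonneg (wnorm_nonneg hwl _) (wnorm_nonneg hwk _)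

lemma wnorm_mulVec_le {mk ml : ℕ} {wk : Fin mk → ℝ} {wl : Fin ml → ℝ}
    (hwk : ∀ i, 0 < wk i) (hwl : ∀ i, 0 < wl i) (M : Matrix (Fin ml) (Fin mk) ℝ)
    (x : Fin mk → ℝ) :
    wnorm wl (M.mulVec x) ≤ opNormW wk wl M * wnorm wk x := by
  set C : ℝ := ∑ j, (∑ i, wl i * |M i j|) / wk j with hC
  have hcol : ∀ j, (∑ i, wl i * |M i j|) ≤ C * wk j := by
    intro j
    rw [← div_le_iff₀ (hwk j), hC]
    exact Finset.single_le_sum (f := fun j => (∑ i, wl i * |M i j|) / wk j) (fun j _ => div_nonneg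
      (Finset.sum_nonneg fun i _ => mul_nonneg (hwl i).le (abs_nonneg _)) (hwk j).le)
      (Finset.mem_univ j)
  have hbound : ∀ y : Fin mk → ℝ, wnorm wl (M.mulVec y) ≤ C * wnorm wk y := by
    intro y
    have h1 : wnorm wl (M.mulVec y) ≤ ∑ j, (∑ i, wl i * |M i j|) * |y j| := by
      have : wnorm wl (M.mulVec y) ≤ ∑ i, ∑ j, wl i * (|M i j| * |y j|) := by
        refine Finset.sum_le_sum fun i _ => ?_
        rw [← Finset.mul_sum]
        refine mul_le_mul_of_nonneg_left ?_ (hwl i).le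
        calc |M.mulVec y i| = |∑ j, M i j * y j| := by rfl
          _ ≤ ∑ j, |M i j * y j| := Finset.abs_sum_le_sum_abs _ _
          _ = ∑ j, |M i j| * |y j| := by simp [abs_mul]
      rw [Finset.sum_comm] at this
      calc wnorm wl (M.mulVec y) ≤ ∑ j, ∑ i, wl i * (|M i j| * |y j|) := this
        _ = ∑ j, (∑ i, wl i * |M i j|) * |y j| := by
            refine Finset.sum_congr rfl fun j _ => ?_
            rw [Finset.sum_mul]; exact Finset.sum_congr rfl fun i _ => by ring
    calc wnorm wl (M.mulVec y) ≤ ∑ j, (∑ i, wl i * |M i j|) * |y j| := h1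
      _ ≤ ∑ j, C * (wk j * |y j|) := by
          refine Finset.sum_le_sum fun j _ => ?_
          rw [← mul_assoc]
          exact mul_le_mul_of_nonneg_right (hcol j) (abs_nonneg _)
      _ = C * wnorm wk y := by rw [wnorm, Finset.mul_sum]
  by_cases hx : x = 0
  · subst hx
    simp [wnorm, Matrix.mulVec_zero]
  · have hpos := wnorm_pos hwk hx
    have hbdd : BddAbove {r : ℝ | ∃ y : Fin mk → ℝ, y ≠ 0 ∧
        r = wnorm wl (M.mulVec y) / wnorm wk y} := by
      refine ⟨C, ?_⟩
      rintro r ⟨y, hy, rfl⟩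
      rw [div_le_iff₀ (wnorm_pos hwk hy)]
      exact hbound y
    have hmem : wnorm wl (M.mulVec x) / wnorm wk x ∈ {r : ℝ | ∃ y : Fin mk → ℝ, y ≠ 0 ∧
        r = wnorm wl (M.mulVec y) / wnorm wk y} := ⟨x, hx, rfl⟩
    have := le_csSup hbdd hmem
    rw [div_le_iff₀ hpos] at this
    exact this

/-- Averaged-operator Lipschitz bound for a 3-layer network (one hidden layer):
if the hidden activation `R₁ = (1/2)Id + (1/2)Q` is componentwise 1/2-averaged
(`Q` 1-Lipschitz) and the output activation `R₂` is componentwise 1-Lipschitz, then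
`T(x) = R₂(A₂ R₁(A₁ x + b₁) + b₂)` is Lipschitz from `‖·‖⁰` to `‖·‖²` with constant
`(1/2)(‖A₂A₁‖^{0,2} + ‖A₂‖^{1,2}·‖A₁‖^{0,1})`. -/
theorem stmt_9 (m0 m1 m2 : ℕ)
    (A1 : Matrix (Fin m1) (Fin m0) ℝ) (A2 : Matrix (Fin m2) (Fin m1) ℝ)
    (b1 : Fin m1 → ℝ) (b2 : Fin m2 → ℝ)
    (Q : ℝ → ℝ) (hQ : ∀ a a' : ℝ, |Q a - Q a'| ≤ |a - a'|)
    (R1 : ℝ → ℝ) (hR1 : ∀ a : ℝ, R1 a = (1 / 2) * a + (1 / 2) * Q a)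
    (R2 : ℝ → ℝ) (hR2 : ∀ a a' : ℝ, |R2 a - R2 a'| ≤ |a - a'|)
    (w0 : Fin m0 → ℝ) (w1 : Fin m1 → ℝ) (w2 : Fin m2 → ℝ)
    (hw0 : ∀ i, 0 < w0 i) (hw1 : ∀ i, 0 < w1 i) (hw2 : ∀ i, 0 < w2 i)
    (T : (Fin m0 → ℝ) → Fin m2 → ℝ)
    (hT : ∀ x, T x = fun i =>
      R2 (A2.mulVec (fun j => R1 (A1.mulVec x j + b1 j)) i + b2 i)) :
    ∀ x x' : Fin m0 → ℝ,
      wnorm w2 (T x - T x') ≤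
        (1 / 2) * (opNormW w0 w2 (A2 * A1) + opNormW w1 w2 A2 * opNormW w0 w1 A1) *
          wnorm w0 (x - x') := by
  intro x x'
  set u : Fin m1 → ℝ := fun j => A1.mulVec x j + b1 j with hu
  set u' : Fin m1 → ℝ := fun j => A1.mulVec x' j + b1 j with hu'
  set v : Fin m1 → ℝ := fun j => R1 (u j) with hv
  set v' : Fin m1 → ℝ := fun j => R1 (u' j) with hv'
  set qd : Fin m1 → ℝ := fun j => Q (u j) - Q (u' j) with hqd
  have hud : u - u' = A1.mulVec (x - x') := by
    funext j
    simp only [Pi.sub_apply, hu, hu', Matrix.mulVec_sub]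
    ring
  have hvd : v - v' = (1/2 : ℝ) • A1.mulVec (x - x') + (1/2 : ℝ) • qd := by
    funext j
    have := congrFun hud j
    simp only [Pi.sub_apply] at this
    simp only [Pi.sub_apply, Pi.add_apply, Pi.smul_apply, hv, hv', hqd, hR1, smul_eq_mul]
    rw [← this]
    ring
  -- step 1 : pointwise bound via R2
  have step1 : wnorm w2 (T x - T x') ≤ wnorm w2 (A2.mulVec (v - v')) := by
    refine wnorm_mono (fun i => (hw2 i).le) fun i => ?_
    simp only [Pi.sub_apply, hT]
    calc |R2 (A2.mulVec v i + b2 i) - R2 (A2.mulVec v' i + b2 i)|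
        ≤ |(A2.mulVec v i + b2 i) - (A2.mulVec v' i + b2 i)| := hR2 _ _
      _ = |A2.mulVec (v - v') i| := by rw [Matrix.mulVec_sub]; congr 1; simp
  have hsplit : A2.mulVec (v - v') =
      (1/2 : ℝ) • (A2 * A1).mulVec (x - x') + (1/2 : ℝ) • A2.mulVec qd := by
    rw [hvd, Matrix.mulVec_add, Matrix.mulVec_smul, Matrix.mulVec_smul,
      ← Matrix.mulVec_mulVec]
  have habs : ∀ (c : ℝ) (y : Fin m2 → ℝ), wnorm w2 (c • y) = |c| * wnorm w2 y := by
    intro c y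
    simp only [wnorm, Pi.smul_apply, smul_eq_mul, abs_mul, Finset.mul_sum]
    exact Finset.sum_congr rfl fun i _ => by ring
  have step2 : wnorm w2 (A2.mulVec (v - v')) ≤
      (1/2 : ℝ) * wnorm w2 ((A2 * A1).mulVec (x - x')) +
      (1/2 : ℝ) * wnorm w2 (A2.mulVec qd) := by
    rw [hsplit]
    calc wnorm w2 ((1/2 : ℝ) • (A2 * A1).mulVec (x - x') + (1/2 : ℝ) • A2.mulVec qd)
        ≤ wnorm w2 ((1/2 : ℝ) • (A2 * A1).mulVec (x - x')) +
          wnorm w2 ((1/2 : ℝ) • A2.mulVec qd) := by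
          simp only [wnorm, ← Finset.sum_add_distrib]
          refine Finset.sum_le_sum fun i _ => ?_
          rw [← mul_add]
          exact mul_le_mul_of_nonneg_left (by simpa using abs_add_le ((1/2 : ℝ) • (A2 * A1).mulVec (x - x') i) ((1/2 : ℝ) • A2.mulVec qd i)) (hw2 i).le
      _ = (1/2 : ℝ) * wnorm w2 ((A2 * A1).mulVec (x - x')) +
          (1/2 : ℝ) * wnorm w2 (A2.mulVec qd) := by
          rw [habs, habs, abs_of_pos (by norm_num : (0:ℝ) < 1/2)]
  have hb1 : wnorm w2 ((A2 * A1).mulVec (x - x')) ≤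
      opNormW w0 w2 (A2 * A1) * wnorm w0 (x - x') := wnorm_mulVec_le hw0 hw2 _ _
  have hb2 : wnorm w2 (A2.mulVec qd) ≤
      opNormW w1 w2 A2 * (opNormW w0 w1 A1 * wnorm w0 (x - x')) := by
    calc wnorm w2 (A2.mulVec qd) ≤ opNormW w1 w2 A2 * wnorm w1 qd :=
          wnorm_mulVec_le hw1 hw2 _ _
      _ ≤ opNormW w1 w2 A2 * (opNormW w0 w1 A1 * wnorm w0 (x - x')) := by
          refine mul_le_mul_of_nonneg_left ?_
            (opNormW_nonneg (fun i => (hw1 i).le) (fun i => (hw2 i).le) _)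
          calc wnorm w1 qd ≤ wnorm w1 (A1.mulVec (x - x')) := by
                refine wnorm_mono (fun i => (hw1 i).le) fun j => ?_
                have := hQ (u j) (u' j)
                have h2 := congrFun hud j
                simp only [Pi.sub_apply] at h2
                simpa [hqd, h2] using this
            _ ≤ opNormW w0 w1 A1 * wnorm w0 (x - x') := wnorm_mulVec_le hw0 hw1 _ _
  calc wnorm w2 (T x - T x') ≤ wnorm w2 (A2.mulVec (v - v')) := step1
    _ ≤ (1/2 : ℝ) * wnorm w2 ((A2 * A1).mulVec (x - x')) +
        (1/2 : ℝ) * wnorm w2 (A2.mulVec qd) := step2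
    _ ≤ (1/2 : ℝ) * (opNormW w0 w2 (A2 * A1) * wnorm w0 (x - x')) +
        (1/2 : ℝ) * (opNormW w1 w2 A2 * (opNormW w0 w1 A1 * wnorm w0 (x - x'))) := by
          gcongr
    _ = (1 / 2) * (opNormW w0 w2 (A2 * A1) + opNormW w1 w2 A2 * opNormW w0 w1 A1) *
          wnorm w0 (x - x') := by ring
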